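/- arXiv:1311.2099 — 2 statements merged into one kernel-verified Lean document; each statement's English description precedes it below -/
import Mathlib

section
/- Let u, V : ℝ → ℂ be 2π-periodic continuously differentiable functions with V real-valued, and let t ∈ ℝ. Then ‖e^{itV}u‖_{H¹} ≥ |t|·‖V'·u‖_{L²} − ‖u‖_{H¹}. In particular, if ‖V'·u‖_{L²} ≠ 0, then ‖e^{itV}u‖_{H¹} → +∞ as t → +∞. -/
open MeasureTheory Real Filter


/-- The `L²` norm of a `2π`-periodic function:
`‖u‖_{L²} = ((1/2π) ∫₀^{2π} |u(x)|² dx)^{1/2}`. -/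
noncomputable def L2norm (u : ℝ → ℂ) : ℝ :=
  Real.sqrt ((1 / (2 * Real.pi)) * ∫ x in (0:ℝ)..(2 * Real.pi), ‖u x‖ ^ 2)

/-- The `H¹` norm of a `2π`-periodic continuously differentiable function:
`‖u‖_{H¹} = (‖u‖_{L²}² + ‖u'‖_{L²}²)^{1/2}`. -/
noncomputable def H1norm (u : ℝ → ℂ) : ℝ :=
  Real.sqrt (L2norm u ^ 2 + L2norm (deriv u) ^ 2)

lemma two_pi_pos' : (0:ℝ) < 2 * Real.pi := by positivity

lemma L2norm_nonneg' (f : ℝ → ℂ) : 0 ≤ Real.sqrt ((1 / (2 * Real.pi)) * ∫ x in (0:ℝ)..(2 * Real.pi), ‖f x‖ ^ 2) := Real.sqrt_nonneg _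

-- Cauchy-Schwarz
lemma cs' (f g : ℝ → ℝ) (hf : Continuous f) (hg : Continuous g)
    (hf0 : ∀ x, 0 ≤ f x) (hg0 : ∀ x, 0 ≤ g x) :
    (∫ x in (0:ℝ)..(2*Real.pi), f x * g x) ≤
      Real.sqrt (∫ x in (0:ℝ)..(2*Real.pi), f x ^ 2) *
      Real.sqrt (∫ x in (0:ℝ)..(2*Real.pi), g x ^ 2) := by
  have hle : (0:ℝ) ≤ 2 * Real.pi := two_pi_pos'.le
  set μ : Measure ℝ := volume.restrict (Set.Ioc (0:ℝ) (2*Real.pi)) with hμ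
  haveI : IsFiniteMeasure μ := by
    constructor
    rw [hμ, Measure.restrict_apply_univ]
    exact measure_Ioc_lt_top
  have hbound : ∀ (h : ℝ → ℝ), Continuous h → MemLp h (ENNReal.ofReal 2) μ := by
    intro h hh
    obtain ⟨C, hC⟩ := (isCompact_Icc (a := (0:ℝ)) (b := 2*Real.pi)).exists_bound_of_continuousOn hh.continuousOn
    refine MemLp.of_bound hh.aestronglyMeasurable C ?_
    rw [hμ]
    refine (ae_restrict_iff' measurableSet_Ioc).2 (ae_of_all _ fun x hx => ?_)
    exact hC x (Set.Ioc_subset_Icc_self hx)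
  have key := MeasureTheory.integral_mul_le_Lp_mul_Lq_of_nonneg
    (μ := μ) (p := 2) (q := 2) Real.HolderConjugate.two_two
    (ae_of_all _ hf0) (ae_of_all _ hg0) (hbound f hf) (hbound g hg)
  rw [intervalIntegral.integral_of_le hle, intervalIntegral.integral_of_le hle,
    intervalIntegral.integral_of_le hle]
  calc ∫ x in Set.Ioc (0:ℝ) (2*Real.pi), f x * g x = ∫ x, f x * g x ∂μ := rfl
    _ ≤ (∫ a, f a ^ (2:ℝ) ∂μ) ^ (1/2:ℝ) * (∫ a, g a ^ (2:ℝ) ∂μ) ^ (1/2:ℝ) := key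
    _ = Real.sqrt (∫ x in Set.Ioc (0:ℝ) (2*Real.pi), f x ^ 2) *
        Real.sqrt (∫ x in Set.Ioc (0:ℝ) (2*Real.pi), g x ^ 2) := by
      have h2 : ∀ y : ℝ, y ^ (2:ℝ) = y ^ 2 := fun y => by
        rw [show (2:ℝ) = ((2:ℕ):ℝ) by norm_num, Real.rpow_natCast]
      simp_rw [Real.sqrt_eq_rpow, h2]
      rfl


lemma l2_add' (f g : ℝ → ℂ) (hf : Continuous f) (hg : Continuous g) :
    L2norm (fun x => f x + g x) ≤ L2norm f + L2norm g := by
  have hle : (0:ℝ) ≤ 2 * Real.pi := two_pi_pos'.le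
  set A := ∫ x in (0:ℝ)..(2*Real.pi), ‖f x‖ ^ 2 with hA
  set B := ∫ x in (0:ℝ)..(2*Real.pi), ‖g x‖ ^ 2 with hB
  set C := ∫ x in (0:ℝ)..(2*Real.pi), ‖f x + g x‖ ^ 2 with hC
  have hfc : Continuous fun x => ‖f x‖ := hf.norm
  have hgc : Continuous fun x => ‖g x‖ := hg.norm
  have hCle : C ≤ A + 2 * (Real.sqrt A * Real.sqrt B) + B := by
    have h1 : C ≤ ∫ x in (0:ℝ)..(2*Real.pi),
        (‖f x‖ + ‖g x‖) ^ 2 := by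
      apply intervalIntegral.integral_mono_on hle
      · exact ((hf.add hg).norm.pow 2).intervalIntegrable _ _
      · exact ((hfc.add hgc).pow 2).intervalIntegrable _ _
      · intro x _
        have := norm_add_le (f x) (g x)
        have h0 : 0 ≤ ‖f x + g x‖ := norm_nonneg _
        nlinarith [norm_nonneg (f x), norm_nonneg (g x)]
    have h2 : ∫ x in (0:ℝ)..(2*Real.pi), (‖f x‖ + ‖g x‖) ^ 2
        = A + 2 * (∫ x in (0:ℝ)..(2*Real.pi), ‖f x‖ * ‖g x‖) + B := by
      have : ∀ x : ℝ, (‖f x‖ + ‖g x‖) ^ 2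
          = ‖f x‖ ^ 2 + 2 * (‖f x‖ * ‖g x‖)
            + ‖g x‖ ^ 2 := fun x => by ring
      simp_rw [this]
      rw [intervalIntegral.integral_add, intervalIntegral.integral_add]
      · simp [intervalIntegral.integral_const_mul, hA, hB]
      · exact (hfc.pow 2).intervalIntegrable _ _
      · exact (continuous_const.mul (hfc.mul hgc)).intervalIntegrable _ _
      · exact ((hfc.pow 2).add (continuous_const.mul (hfc.mul hgc))).intervalIntegrable _ _
      · exact (hgc.pow 2).intervalIntegrable _ _
    have h3 := cs' _ _ hfc hgc (fun x => norm_nonneg _) (fun x => norm_nonneg _)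
    rw [h2] at h1
    rw [hA, hB]
    linarith
  have hA0 : 0 ≤ A := intervalIntegral.integral_nonneg hle (fun x _ => by positivity)
  have hB0 : 0 ≤ B := intervalIntegral.integral_nonneg hle (fun x _ => by positivity)
  have hc0 : (0:ℝ) ≤ 1 / (2 * Real.pi) := by positivity
  unfold L2norm
  rw [← hA, ← hB, ← hC, Real.sqrt_mul hc0, Real.sqrt_mul hc0, Real.sqrt_mul hc0, ← mul_add]
  apply mul_le_mul_of_nonneg_left _ (Real.sqrt_nonneg _)
  have : C ≤ (Real.sqrt A + Real.sqrt B) ^ 2 := by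
    have := Real.sq_sqrt hA0
    have := Real.sq_sqrt hB0
    nlinarith
  calc Real.sqrt C ≤ Real.sqrt ((Real.sqrt A + Real.sqrt B) ^ 2) := Real.sqrt_le_sqrt this
    _ = Real.sqrt A + Real.sqrt B := Real.sqrt_sq (by positivity)

lemma l2_congr' (f g : ℝ → ℂ) (h : ∀ x, ‖f x‖ = ‖g x‖) :
    L2norm f = L2norm g := by
  unfold L2norm; simp_rw [h]

lemma l2_abs_mul' (a : ℝ) (ha : 0 ≤ a) (f g : ℝ → ℂ)
    (h : ∀ x, ‖f x‖ = a * ‖g x‖) :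
    L2norm f = a * L2norm g := by
  unfold L2norm
  simp_rw [h, mul_pow]
  rw [intervalIntegral.integral_const_mul, show (1 / (2 * Real.pi)) * (a^2 * ∫ x in (0:ℝ)..(2*Real.pi), ‖g x‖ ^2) = a^2 * ((1 / (2 * Real.pi)) * ∫ x in (0:ℝ)..(2*Real.pi), ‖g x‖ ^2) by ring,
    Real.sqrt_mul (sq_nonneg a), Real.sqrt_sq ha]


lemma l2_nonneg' (f : ℝ → ℂ) : 0 ≤ L2norm f := Real.sqrt_nonneg _

lemma h1_ge_l2_deriv' (f : ℝ → ℂ) : L2norm (deriv f) ≤ H1norm f := by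
  unfold H1norm
  calc L2norm (deriv f) = Real.sqrt (L2norm (deriv f) ^ 2) := (Real.sqrt_sq (l2_nonneg' _)).symm
    _ ≤ _ := Real.sqrt_le_sqrt (le_add_of_nonneg_left (sq_nonneg _))

/-- For `u, V : ℝ → ℂ` `2π`-periodic `C¹` functions with `V` real-valued,
and any `t ∈ ℝ`, one has `‖e^{itV}u‖_{H¹} ≥ |t|·‖V'·u‖_{L²} − ‖u‖_{H¹}`; in particular, if
`‖V'·u‖_{L²} ≠ 0`, then `‖e^{itV}u‖_{H¹} → +∞` as `t → +∞`. -/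
theorem stmt0 (u V : ℝ → ℂ)
    (hu_per : ∀ x, u (x + 2 * Real.pi) = u x)
    (hV_per : ∀ x, V (x + 2 * Real.pi) = V x)
    (hu : ContDiff ℝ 1 u) (hV : ContDiff ℝ 1 V)
    (hV_real : ∀ x, (V x).im = 0) :
    (∀ t : ℝ,
      H1norm (fun x => Complex.exp (Complex.I * t * V x) * u x) ≥
        |t| * L2norm (fun x => deriv V x * u x) - H1norm u) ∧
    (L2norm (fun x => deriv V x * u x) ≠ 0 →
      Filter.Tendsto (fun t : ℝ => H1norm (fun x => Complex.exp (Complex.I * t * V x) * u x))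
        Filter.atTop Filter.atTop) := by
  have hVd : Differentiable ℝ V := hV.differentiable one_ne_zero
  have hud : Differentiable ℝ u := hu.differentiable one_ne_zero
  have hVc : Continuous V := hV.continuous
  have huc : Continuous u := hu.continuous
  have hV'c : Continuous (deriv V) := hV.continuous_deriv le_rfl
  have hu'c : Continuous (deriv u) := hu.continuous_deriv le_rfl
  have main : ∀ t : ℝ,
      H1norm (fun x => Complex.exp (Complex.I * t * V x) * u x) ≥
        |t| * L2norm (fun x => deriv V x * u x) - H1norm u := by
    intro t
    set E : ℝ → ℂ := fun x => Complex.exp (Complex.I * t * V x) with hE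
    have hEc : Continuous E := Complex.continuous_exp.comp (continuous_const.mul hVc)
    have habsE : ∀ x, ‖E x‖ = 1 := by
      intro x
      rw [hE]
      simp only [Complex.norm_exp]
      have : (Complex.I * t * V x).re = 0 := by
        simp [Complex.mul_re, Complex.mul_im, hV_real x]
      rw [this, Real.exp_zero]
    set w : ℝ → ℂ := fun x => E x * u x with hw
    have hderiv : ∀ x, HasDerivAt w (E x * (Complex.I * t * deriv V x) * u x + E x * deriv u x) x := by
      intro x
      have h1 : HasDerivAt (fun y => Complex.I * t * V y) (Complex.I * t * deriv V x) x :=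
        ((hVd x).hasDerivAt).const_mul _
      have h2 : HasDerivAt E (E x * (Complex.I * t * deriv V x)) x := h1.cexp
      exact h2.mul (hud x).hasDerivAt
    have hwderiv : deriv w = fun x => E x * (Complex.I * t * deriv V x) * u x + E x * deriv u x :=
      funext fun x => (hderiv x).deriv
    set G : ℝ → ℂ := fun x => E x * (Complex.I * t * deriv V x) * u x with hG
    set Hf : ℝ → ℂ := fun x => E x * deriv u x with hHf
    have hGc : Continuous G := (hEc.mul (continuous_const.mul hV'c)).mul huc
    have hHc : Continuous Hf := hEc.mul hu'c
    have hl2G : L2norm G = |t| * L2norm (fun x => deriv V x * u x) := by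
      apply l2_abs_mul' _ (abs_nonneg t)
      intro x
      simp only [hG, norm_mul, habsE, Complex.norm_I, Complex.norm_real, Real.norm_eq_abs]
      ring
    have htri : L2norm G ≤ L2norm (deriv w) + L2norm Hf := by
      have h1 : L2norm G = L2norm (fun x => deriv w x + (- Hf x)) := by
        apply l2_congr'
        intro x
        rw [hwderiv]
        simp only [hG, hHf]
        ring_nf
      rw [h1, hwderiv]
      have h2 := l2_add' (fun x => E x * (Complex.I * t * deriv V x) * u x + E x * deriv u x)
        (fun x => - Hf x) (hGc.add hHc) hHc.neg
      calc L2norm (fun x => (E x * (Complex.I * t * deriv V x) * u x + E x * deriv u x) + (- Hf x))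
          ≤ L2norm (fun x => E x * (Complex.I * t * deriv V x) * u x + E x * deriv u x)
            + L2norm (fun x => - Hf x) := h2
        _ = _ := by
            congr 1
            apply l2_congr'
            intro x
            simp
    have hHfu : L2norm Hf = L2norm (deriv u) := by
      apply l2_congr'
      intro x
      simp only [hHf, norm_mul, habsE, one_mul]
    have hh1 : L2norm (deriv w) ≤ H1norm w := h1_ge_l2_deriv' w
    have hh2 : L2norm (deriv u) ≤ H1norm u := h1_ge_l2_deriv' u
    have : H1norm w ≥ |t| * L2norm (fun x => deriv V x * u x) - H1norm u := by
      rw [← hl2G]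
      linarith [htri, hHfu ▸ hh2]
    exact this
  refine ⟨main, fun hne => ?_⟩
  have hc : 0 < L2norm (fun x => deriv V x * u x) :=
    lt_of_le_of_ne (l2_nonneg' _) (Ne.symm hne)
  apply Filter.tendsto_atTop_mono'
    (f₁ := fun t : ℝ => t * L2norm (fun x => deriv V x * u x) - H1norm u)
  · filter_upwards [Filter.eventually_ge_atTop (0:ℝ)] with t ht
    have := main t
    rw [abs_of_nonneg ht] at this
    linarith
  · apply Filter.tendsto_atTop_add_const_right
    exact Filter.Tendsto.atTop_mul_const hc Filter.tendsto_id
end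

section
/- (Gagliardo–Nirenberg inequality on the torus.) There exists a constant C > 0 such that for every 2π-periodic continuously differentiable function u : ℝ → ℂ, ‖u‖_{L⁴}⁴ ≤ C·‖u‖_{H¹}·‖u‖_{L²}³. -/
open MeasureTheory Set

/-- The `L⁴` norm: `‖u‖_{L⁴} = ((1/2π) ∫₀^{2π} |u(x)|⁴ dx)^{1/4}`. -/
noncomputable def L4norm (u : ℝ → ℂ) : ℝ :=
  ((1 / (2 * Real.pi)) * ∫ x in (0:ℝ)..(2 * Real.pi), ‖u x‖ ^ 4) ^ ((1:ℝ) / 4)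

/-- Cauchy–Schwarz for interval integrals of continuous nonnegative functions. -/
lemma cs_aux {f g : ℝ → ℝ} (hf : Continuous f) (hg : Continuous g)
    (hf0 : ∀ x, 0 ≤ f x) (hg0 : ∀ x, 0 ≤ g x) {a b : ℝ} (hab : a ≤ b) :
    ∫ x in a..b, f x * g x ≤
      Real.sqrt (∫ x in a..b, f x ^ 2) * Real.sqrt (∫ x in a..b, g x ^ 2) := by
  set P := ∫ x in a..b, f x ^ 2 with hP
  set Q := ∫ x in a..b, g x ^ 2 with hQ
  set I := ∫ x in a..b, f x * g x with hI
  have hPnn : 0 ≤ P := intervalIntegral.integral_nonneg hab (fun x _ => sq_nonneg _)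
  have hQnn : 0 ≤ Q := intervalIntegral.integral_nonneg hab (fun x _ => sq_nonneg _)
  have hInn : 0 ≤ I :=
    intervalIntegral.integral_nonneg hab (fun x _ => mul_nonneg (hf0 x) (hg0 x))
  have key : ∀ t : ℝ, 0 ≤ t ^ 2 * P - 2 * t * I + Q := by
    intro t
    have hif : IntervalIntegrable (fun x => f x ^ 2) volume a b :=
      (hf.pow 2).intervalIntegrable a b
    have hig : IntervalIntegrable (fun x => g x ^ 2) volume a b :=
      (hg.pow 2).intervalIntegrable a b
    have hifg : IntervalIntegrable (fun x => f x * g x) volume a b :=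
      (hf.mul hg).intervalIntegrable a b
    have h1 : ∫ x in a..b, (t * f x - g x) ^ 2 = t ^ 2 * P - 2 * t * I + Q := by
      have heq : (fun x => (t * f x - g x) ^ 2) =
          fun x => (t ^ 2 * f x ^ 2 - 2 * t * (f x * g x)) + g x ^ 2 := by
        funext x; ring
      rw [heq,
        intervalIntegral.integral_add ((hif.const_mul _).sub (hifg.const_mul _)) hig,
        intervalIntegral.integral_sub (hif.const_mul _) (hifg.const_mul _),
        intervalIntegral.integral_const_mul, intervalIntegral.integral_const_mul]
    have h2 : 0 ≤ ∫ x in a..b, (t * f x - g x) ^ 2 :=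
      intervalIntegral.integral_nonneg hab (fun x _ => sq_nonneg _)
    linarith [h1 ▸ h2]
  rcases eq_or_lt_of_le hPnn with hP0 | hP0
  · -- P = 0 : then I ≤ 0
    have hIle : I ≤ 0 := by
      by_contra hcon
      push_neg at hcon
      have h := key ((Q + 1) / (2 * I))
      rw [← hP0] at h
      have h2I : (0:ℝ) < 2 * I := by linarith
      have heq : 2 * ((Q + 1) / (2 * I)) * I = Q + 1 := by
        field_simp
      rw [heq] at h
      simp at h
      linarith
    exact hIle.trans (mul_nonneg (Real.sqrt_nonneg _) (Real.sqrt_nonneg _))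
  · have hP0' : P ≠ 0 := ne_of_gt hP0
    have h := key (I / P)
    have hI2 : I ^ 2 ≤ P * Q := by
      have h1 : (I / P) ^ 2 * P = I ^ 2 / P := by field_simp
      have h2 : 2 * (I / P) * I = 2 * (I ^ 2) / P := by field_simp
      rw [h1, h2] at h
      have h3 : I ^ 2 / P ≤ Q := by
        have : I ^ 2 / P - 2 * I ^ 2 / P = -(I ^ 2 / P) := by ring
        linarith
      calc I ^ 2 = (I ^ 2 / P) * P := by field_simp
        _ ≤ Q * P := mul_le_mul_of_nonneg_right h3 hPnn
        _ = P * Q := mul_comm _ _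
    calc I = Real.sqrt (I ^ 2) := (Real.sqrt_sq hInn).symm
      _ ≤ Real.sqrt (P * Q) := Real.sqrt_le_sqrt hI2
      _ = _ := Real.sqrt_mul hPnn _

set_option maxHeartbeats 1000000 in
/-- **Gagliardo–Nirenberg inequality on the torus.** There is a constant
`C > 0` such that every `2π`-periodic `C¹` function `u` satisfies
`‖u‖_{L⁴}⁴ ≤ C·‖u‖_{H¹}·‖u‖_{L²}³`. -/
theorem stmt7 :
    ∃ C : ℝ, 0 < C ∧
      ∀ u : ℝ → ℂ, (∀ x, u (x + 2 * Real.pi) = u x) → ContDiff ℝ 1 u →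
        L4norm u ^ 4 ≤ C * H1norm u * L2norm u ^ 3 := by
  have hπ : (0:ℝ) < Real.pi := Real.pi_pos
  have h2π : (0:ℝ) < 2 * Real.pi := by linarith
  refine ⟨1 + 4 * Real.pi, by linarith, ?_⟩
  intro u _ hC1
  have hu : Continuous u := hC1.continuous
  have hu' : Continuous (deriv u) := hC1.continuous_deriv le_rfl
  set A := ∫ x in (0:ℝ)..(2 * Real.pi), ‖u x‖ ^ 2 with hAdef
  set B := ∫ x in (0:ℝ)..(2 * Real.pi), ‖deriv u x‖ ^ 2 with hBdef
  have hAnn : 0 ≤ A :=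
    intervalIntegral.integral_nonneg h2π.le (fun x _ => sq_nonneg _)
  have hBnn : 0 ≤ B :=
    intervalIntegral.integral_nonneg h2π.le (fun x _ => sq_nonneg _)
  have hL2u : L2norm u = Real.sqrt ((1 / (2 * Real.pi)) * A) := by
    simp only [L2norm, hAdef]
  have hL2u' : L2norm (deriv u) = Real.sqrt ((1 / (2 * Real.pi)) * B) := by
    simp only [L2norm, hBdef]
  have hann : 0 ≤ L2norm u := by rw [hL2u]; exact Real.sqrt_nonneg _
  have hbnn : 0 ≤ L2norm (deriv u) := by rw [hL2u']; exact Real.sqrt_nonneg _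
  have ha2 : L2norm u ^ 2 = (1 / (2 * Real.pi)) * A := by
    rw [hL2u]; exact Real.sq_sqrt (by positivity)
  have hb2 : L2norm (deriv u) ^ 2 = (1 / (2 * Real.pi)) * B := by
    rw [hL2u']; exact Real.sq_sqrt (by positivity)
  have hhnn : 0 ≤ H1norm u := Real.sqrt_nonneg _
  have hh2 : H1norm u ^ 2 = L2norm u ^ 2 + L2norm (deriv u) ^ 2 := by
    simp only [H1norm]; exact Real.sq_sqrt (by positivity)
  have hah : L2norm u ≤ H1norm u := by
    nlinarith [sq_nonneg (L2norm (deriv u)), sq_nonneg (H1norm u - L2norm u)]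
  have hbh : L2norm (deriv u) ≤ H1norm u := by
    nlinarith [sq_nonneg (L2norm u), sq_nonneg (H1norm u - L2norm (deriv u))]
  -- derivative of |u|^2
  set φ : ℝ → ℝ := fun x => 2 * (inner ℝ (u x) (deriv u x) : ℝ) with hφdef
  have hderiv : ∀ x, HasDerivAt (fun x => ‖u x‖ ^ 2) (φ x) x :=
    fun x => ((hC1.differentiable one_ne_zero x).hasDerivAt).norm_sq
  have hφc : Continuous φ := continuous_const.mul (hu.inner hu')
  have hgc : Continuous fun x => ‖u x‖ ^ 2 := (hu.norm).pow 2
  -- minimum point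
  obtain ⟨y₀, hy₀mem, hy₀min⟩ :=
    isCompact_Icc.exists_isMinOn (⟨0, by constructor <;> linarith⟩ :
      (Icc (0:ℝ) (2 * Real.pi)).Nonempty) hgc.continuousOn
  have havg : 2 * Real.pi * ‖u y₀‖ ^ 2 ≤ A := by
    have hmono : (∫ _ in (0:ℝ)..(2 * Real.pi), ‖u y₀‖ ^ 2) ≤ A := by
      rw [hAdef]
      exact intervalIntegral.integral_mono_on h2π.le (intervalIntegrable_const)
        (hgc.intervalIntegrable _ _) (fun x hx => isMinOn_iff.mp hy₀min x hx)
    rwa [intervalIntegral.integral_const, smul_eq_mul, sub_zero] at hmono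
  -- total variation bound
  set V := ∫ t in (0:ℝ)..(2 * Real.pi), |φ t| with hVdef
  have hVnn : 0 ≤ V :=
    intervalIntegral.integral_nonneg h2π.le (fun x _ => abs_nonneg _)
  have hsup : ∀ x ∈ Icc (0:ℝ) (2 * Real.pi), ‖u x‖ ^ 2 ≤ A / (2 * Real.pi) + V := by
    intro x hx
    have hFTC : ∫ t in y₀..x, φ t = ‖u x‖ ^ 2 - ‖u y₀‖ ^ 2 :=
      intervalIntegral.integral_eq_sub_of_hasDerivAt (fun t _ => hderiv t)
        (hφc.intervalIntegrable _ _)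
    have hsub : Set.uIoc y₀ x ⊆ Set.uIoc (0:ℝ) (2 * Real.pi) := by
      apply uIoc_subset_uIoc_of_uIcc_subset_uIcc
      rw [uIcc_of_le h2π.le]
      exact uIcc_subset_Icc hy₀mem hx
    have h2 : ∫ t in y₀..x, φ t ≤ V := by
      calc ∫ t in y₀..x, φ t ≤ |∫ t in y₀..x, φ t| := le_abs_self _
        _ ≤ abs (∫ t in y₀..x, |φ t|) := by
            simpa [Real.norm_eq_abs] using
              intervalIntegral.norm_integral_le_abs_integral_norm (f := φ) (a := y₀) (b := x)
        _ ≤ abs (∫ t in (0:ℝ)..(2 * Real.pi), |φ t|) :=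
            intervalIntegral.abs_integral_mono_interval hsub
              (Filter.Eventually.of_forall (fun t => abs_nonneg _))
              (hφc.abs.intervalIntegrable _ _)
        _ = V := by rw [← hVdef, abs_of_nonneg hVnn]
    have h3 : ‖u y₀‖ ^ 2 ≤ A / (2 * Real.pi) := by
      rw [le_div_iff₀ h2π]; linarith
    linarith
  -- Cauchy–Schwarz bound on V
  have hV : V ≤ 2 * (Real.sqrt A * Real.sqrt B) := by
    have hb1 : V ≤ ∫ t in (0:ℝ)..(2 * Real.pi), 2 * (‖u t‖ * ‖deriv u t‖) := by
      rw [hVdef]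
      refine intervalIntegral.integral_mono_on h2π.le (hφc.abs.intervalIntegrable _ _)
        ((continuous_const.mul (hu.norm.mul hu'.norm)).intervalIntegrable _ _) (fun t _ => ?_)
      have hφt : φ t = 2 * (inner ℝ (u t) (deriv u t) : ℝ) := rfl
      rw [hφt]
      calc |2 * (inner ℝ (u t) (deriv u t) : ℝ)| = 2 * |(inner ℝ (u t) (deriv u t) : ℝ)| := by
            rw [abs_mul, abs_of_nonneg (by norm_num : (0:ℝ) ≤ 2)]
        _ ≤ 2 * (‖u t‖ * ‖deriv u t‖) := by
            have := abs_real_inner_le_norm (u t) (deriv u t); linarith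
    have hb2 : (∫ t in (0:ℝ)..(2 * Real.pi), 2 * (‖u t‖ * ‖deriv u t‖)) =
        2 * ∫ t in (0:ℝ)..(2 * Real.pi), ‖u t‖ * ‖deriv u t‖ :=
      intervalIntegral.integral_const_mul _ _
    have hb3 := cs_aux hu.norm hu'.norm (fun x => norm_nonneg _) (fun x => norm_nonneg _) h2π.le
    rw [← hAdef, ← hBdef] at hb3
    linarith
  -- L⁴ bound
  set S := A / (2 * Real.pi) + V with hSdef
  have hI4 : (∫ x in (0:ℝ)..(2 * Real.pi), ‖u x‖ ^ 4) ≤ S * A := by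
    have hm : (∫ x in (0:ℝ)..(2 * Real.pi), ‖u x‖ ^ 4) ≤
        ∫ x in (0:ℝ)..(2 * Real.pi), S * ‖u x‖ ^ 2 := by
      refine intervalIntegral.integral_mono_on h2π.le ((hu.norm.pow 4).intervalIntegrable _ _)
        ((continuous_const.mul hgc).intervalIntegrable _ _) (fun x hx => ?_)
      have h1 : ‖u x‖ ^ 4 = ‖u x‖ ^ 2 * ‖u x‖ ^ 2 := by ring
      rw [h1]
      exact mul_le_mul_of_nonneg_right (hsup x hx) (sq_nonneg _)
    rw [intervalIntegral.integral_const_mul, ← hAdef] at hm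
    exact hm
  -- rewrite L4norm
  have hI4nn : 0 ≤ (1 / (2 * Real.pi)) * ∫ x in (0:ℝ)..(2 * Real.pi), ‖u x‖ ^ 4 := by
    have : 0 ≤ ∫ x in (0:ℝ)..(2 * Real.pi), ‖u x‖ ^ 4 :=
      intervalIntegral.integral_nonneg h2π.le (fun x _ => by positivity)
    positivity
  have hL4 : L4norm u ^ 4 = (1 / (2 * Real.pi)) * ∫ x in (0:ℝ)..(2 * Real.pi), ‖u x‖ ^ 4 := by
    simp only [L4norm]
    rw [← Real.rpow_natCast (_ ^ ((1:ℝ)/4)) 4, ← Real.rpow_mul hI4nn]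
    norm_num
  -- sqrt identities
  have hs2π : Real.sqrt (2 * Real.pi) * Real.sqrt (2 * Real.pi) = 2 * Real.pi :=
    Real.mul_self_sqrt h2π.le
  have hsA : Real.sqrt A = Real.sqrt (2 * Real.pi) * L2norm u := by
    rw [show A = (2 * Real.pi) * ((1 / (2 * Real.pi)) * A) by field_simp,
      Real.sqrt_mul h2π.le, ← ha2, Real.sqrt_sq hann]
  have hsB : Real.sqrt B = Real.sqrt (2 * Real.pi) * L2norm (deriv u) := by
    rw [show B = (2 * Real.pi) * ((1 / (2 * Real.pi)) * B) by field_simp,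
      Real.sqrt_mul h2π.le, ← hb2, Real.sqrt_sq hbnn]
  have hA2π : A = 2 * Real.pi * L2norm u ^ 2 := by rw [ha2]; field_simp
  have hsAB : Real.sqrt A * Real.sqrt B = 2 * Real.pi * (L2norm u * L2norm (deriv u)) := by
    calc Real.sqrt A * Real.sqrt B
        = (Real.sqrt (2 * Real.pi) * Real.sqrt (2 * Real.pi)) *
            (L2norm u * L2norm (deriv u)) := by rw [hsA, hsB]; ring
      _ = 2 * Real.pi * (L2norm u * L2norm (deriv u)) := by rw [hs2π]
  have hVb : V ≤ 4 * Real.pi * (L2norm u * L2norm (deriv u)) := by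
    rw [hsAB] at hV; linarith
  rw [hL4]
  have hSb : S ≤ L2norm u ^ 2 + 4 * Real.pi * (L2norm u * L2norm (deriv u)) := by
    rw [hSdef, hA2π]
    have : 2 * Real.pi * L2norm u ^ 2 / (2 * Real.pi) = L2norm u ^ 2 := by field_simp
    linarith
  have hSnn : 0 ≤ S := by rw [hSdef]; positivity
  calc (1 / (2 * Real.pi)) * ∫ x in (0:ℝ)..(2 * Real.pi), ‖u x‖ ^ 4
      ≤ (1 / (2 * Real.pi)) * (S * A) := by
        exact mul_le_mul_of_nonneg_left hI4 (by positivity)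
    _ = S * L2norm u ^ 2 := by rw [hA2π]; field_simp
    _ ≤ (L2norm u ^ 2 + 4 * Real.pi * (L2norm u * L2norm (deriv u))) * L2norm u ^ 2 :=
        mul_le_mul_of_nonneg_right hSb (sq_nonneg _)
    _ ≤ (1 + 4 * Real.pi) * H1norm u * L2norm u ^ 3 := by
        have h1 : L2norm u * L2norm u ^ 3 ≤ H1norm u * L2norm u ^ 3 :=
          mul_le_mul_of_nonneg_right hah (by positivity)
        have h2 : L2norm (deriv u) * L2norm u ^ 3 ≤ H1norm u * L2norm u ^ 3 :=
          mul_le_mul_of_nonneg_right hbh (by positivity)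
        have h3 : Real.pi * (L2norm (deriv u) * L2norm u ^ 3) ≤
            Real.pi * (H1norm u * L2norm u ^ 3) :=
          mul_le_mul_of_nonneg_left h2 hπ.le
        nlinarith [h1, h3]
end
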